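/- Let D be a dense subset of a band of topological groups S. Then for any open set U containing E(S), (UD)* = S and (DU)* = S. -/
import Mathlib


open Set TopologicalSpace

/-- The principal left ideal (with `a` adjoined) generated by `a`: `{a} ∪ {s*a : s ∈ S}`. -/
def leftIdeal {S : Type*} [Semigroup S] (a : S) : Set S :=
  insert a {x | ∃ s, x = s * a}

/-- The principal right ideal (with `a` adjoined) generated by `a`: `{a} ∪ {a*s : s ∈ S}`. -/
def rightIdeal {S : Type*} [Semigroup S] (a : S) : Set S :=
  insert a {x | ∃ s, x = a * s}

/-- Green's relation ℋ on a semigroup. -/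
def greenH {S : Type*} [Semigroup S] (a b : S) : Prop :=
  leftIdeal a = leftIdeal b ∧ rightIdeal a = rightIdeal b

/-- The ℋ-class of an element. -/
def HClass {S : Type*} [Semigroup S] (x : S) : Set S := {y | greenH y x}

/-- A semigroup is completely regular if every element is completely regular. -/
def CompletelyRegularSemigroup (S : Type*) [Semigroup S] : Prop :=
  ∀ a : S, ∃ x, a = a * x * a ∧ a * x = x * a

/-- Green's relation ℋ is a congruence. -/
def HIsCongruence (S : Type*) [Semigroup S] : Prop :=
  ∀ a b c : S, greenH a b → greenH (a * c) (b * c) ∧ greenH (c * a) (c * b)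

/-- A cryptogroup is a completely regular semigroup in which ℋ is a congruence. -/
def IsCryptogroup (S : Type*) [Semigroup S] : Prop :=
  CompletelyRegularSemigroup S ∧ HIsCongruence S

/-- In a cryptogroup every ℋ-class is a group; `idp x` (written `x⁰`) is the identity of the
ℋ-class of `x`, and `inv x` (written `x⁻¹`) is the inverse of `x` inside its ℋ-class. -/
structure CryptoOps (S : Type*) [Semigroup S] where
  idp : S → S
  inv : S → S
  idp_mem : ∀ x, greenH (idp x) x
  idp_mul : ∀ x y, greenH y x → idp x * y = y
  mul_idp : ∀ x y, greenH y x → y * idp x = y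
  inv_mem : ∀ x, greenH (inv x) x
  mul_inv : ∀ x, x * inv x = idp x
  inv_mul : ∀ x, inv x * x = idp x

/-- The set `E(S)` of idempotents of a semigroup. -/
def idemSet (S : Type*) [Semigroup S] : Set S := {e | e * e = e}

/-- `(xU)* = {y ∈ S : x⁻¹*y ∈ U and x⁰ = y⁰}`. -/
def lstar {S : Type*} [Semigroup S] (ops : CryptoOps S) (x : S) (U : Set S) : Set S :=
  {y | ops.inv x * y ∈ U ∧ ops.idp x = ops.idp y}

/-- `(Ux)* = {y ∈ S : y*x⁻¹ ∈ U and x⁰ = y⁰}`. -/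
def rstar {S : Type*} [Semigroup S] (ops : CryptoOps S) (U : Set S) (x : S) : Set S :=
  {y | y * ops.inv x ∈ U ∧ ops.idp x = ops.idp y}

/-- `(AB)* = ⋃_{a ∈ A} (aB)*`. -/
def setStar {S : Type*} [Semigroup S] (ops : CryptoOps S) (A B : Set S) : Set S :=
  ⋃ a ∈ A, lstar ops a B

/-- A full subcryptogroup: contains all idempotents, and closed under multiplication
and inversion. -/
def IsFullSubcryptogroup {S : Type*} [Semigroup S] (ops : CryptoOps S) (K : Set S) : Prop :=
  idemSet S ⊆ K ∧ (∀ x ∈ K, ∀ y ∈ K, x * y ∈ K) ∧ (∀ x ∈ K, ops.inv x ∈ K)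

section Aux

variable {S : Type*} [Semigroup S]

lemma greenH_refl' (a : S) : greenH a a := ⟨rfl, rfl⟩

lemma greenH_symm' {a b : S} (h : greenH a b) : greenH b a := ⟨h.1.symm, h.2.symm⟩

lemma greenH_trans' {a b c : S} (h1 : greenH a b) (h2 : greenH b c) : greenH a c :=
  ⟨h1.1.trans h2.1, h1.2.trans h2.2⟩

lemma greenH_sq' (ops : CryptoOps S) (y : S) : greenH (y * y) y := by
  constructor
  · ext x
    simp only [leftIdeal, Set.mem_insert_iff, Set.mem_setOf_eq]
    constructor
    · rintro (rfl | ⟨s, rfl⟩)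
      · exact Or.inr ⟨y, rfl⟩
      · exact Or.inr ⟨s * y, (mul_assoc _ _ _).symm⟩
    · rintro (rfl | ⟨s, rfl⟩)
      · refine Or.inr ⟨ops.inv x, ?_⟩
        rw [← mul_assoc, ops.inv_mul, ops.idp_mul x x (greenH_refl' x)]
      · refine Or.inr ⟨s * ops.inv y, ?_⟩
        rw [mul_assoc, ← mul_assoc (ops.inv y), ops.inv_mul,
          ops.idp_mul y y (greenH_refl' y)]
  · ext x
    simp only [rightIdeal, Set.mem_insert_iff, Set.mem_setOf_eq]
    constructor
    · rintro (rfl | ⟨s, rfl⟩)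
      · exact Or.inr ⟨y, rfl⟩
      · exact Or.inr ⟨y * s, mul_assoc _ _ _⟩
    · rintro (rfl | ⟨s, rfl⟩)
      · refine Or.inr ⟨ops.inv x, ?_⟩
        rw [mul_assoc, ops.mul_inv, ops.mul_idp x x (greenH_refl' x)]
      · refine Or.inr ⟨ops.inv y * s, ?_⟩
        rw [← mul_assoc, mul_assoc y y, ops.mul_inv,
          ops.mul_idp y y (greenH_refl' y)]
    
lemma greenH_mul' (ops : CryptoOps S) (hc : HIsCongruence S) {a b y : S}
    (ha : greenH a y) (hb : greenH b y) : greenH (a * b) y :=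
  greenH_trans' (hc a y b ha).1 (greenH_trans' (hc b y y hb).2 (greenH_sq' ops y))

lemma idp_eq' (ops : CryptoOps S) {d y : S} (h : greenH d y) :
    ops.idp d = ops.idp y := by
  have h1 : ops.idp d * ops.idp y = ops.idp y :=
    ops.idp_mul d _ (greenH_trans' (ops.idp_mem y) (greenH_symm' h))
  have h2 : ops.idp d * ops.idp y = ops.idp d :=
    ops.mul_idp y _ (greenH_trans' (ops.idp_mem d) h)
  exact h2.symm.trans h1

end Aux

/-- If `D` is dense in a band of topological groups `S`, then for any open `U ⊇ E(S)`,
`(UD)* = S = (DU)*`. -/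
theorem stmt4 {S : Type*} [Semigroup S] [TopologicalSpace S] [ContinuousMul S]
    (ops : CryptoOps S) (hcrypt : IsCryptogroup S)
    (hinv : Continuous ops.inv) (hopen : ∀ x : S, IsOpen (HClass x))
    (D : Set S) (hD : Dense D)
    (U : Set S) (hU : IsOpen U) (hEU : idemSet S ⊆ U) :
    setStar ops U D = Set.univ ∧ setStar ops D U = Set.univ := by
  obtain ⟨-, hcong⟩ := hcrypt
  have hidem : ∀ y : S, ops.idp y ∈ U := fun y =>
    hEU (ops.idp_mul y _ (ops.idp_mem y))
  constructor
  · ext y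
    simp only [setStar, Set.mem_iUnion₂, lstar, Set.mem_setOf_eq, Set.mem_univ, iff_true]
    have hopenset : IsOpen (HClass y ∩ (fun d => y * ops.inv d) ⁻¹' U) :=
      (hopen y).inter ((continuous_const.mul hinv).isOpen_preimage U hU)
    have hyin : y ∈ HClass y ∩ (fun d => y * ops.inv d) ⁻¹' U := by
      refine ⟨greenH_refl' y, ?_⟩
      show y * ops.inv y ∈ U
      rw [ops.mul_inv]
      exact hidem y
    obtain ⟨d, hdD, hdy, hdU⟩ := hD.exists_mem_open hopenset ⟨y, hyin⟩
    have hdy : greenH d y := hdy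
    have huU : y * ops.inv d ∈ U := hdU
    set u := y * ops.inv d with hu_def
    have hinvdy : greenH (ops.inv d) y := greenH_trans' (ops.inv_mem d) hdy
    have hu : greenH u y := greenH_mul' ops hcong (greenH_refl' y) hinvdy
    have hidpd : ops.idp d = ops.idp y := idp_eq' ops hdy
    have hidpu : ops.idp u = ops.idp y := idp_eq' ops hu
    set v := d * ops.inv y with hv_def
    have hv : greenH v y := greenH_mul' ops hcong hdy (ops.inv_mem y)
    have huv : u * v = ops.idp y := by
      rw [hu_def, hv_def, mul_assoc, ← mul_assoc (ops.inv d), ops.inv_mul,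
        hidpd, ops.idp_mul y _ (ops.inv_mem y), ops.mul_inv]
    have hinvu : ops.inv u = v :=
      calc ops.inv u = ops.inv u * ops.idp u :=
            (ops.mul_idp u _ (ops.inv_mem u)).symm
        _ = ops.inv u * (u * v) := by rw [hidpu, huv]
        _ = (ops.inv u * u) * v := (mul_assoc _ _ _).symm
        _ = ops.idp u * v := by rw [ops.inv_mul]
        _ = ops.idp y * v := by rw [hidpu]
        _ = v := ops.idp_mul y v hv
    have hfin : ops.inv u * y = d := by
      rw [hinvu, hv_def, mul_assoc, ops.inv_mul, ← hidpd,
        ops.mul_idp d d (greenH_refl' d)]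
    exact ⟨u, huU, hfin ▸ hdD, hidpu⟩
  · ext y
    simp only [setStar, Set.mem_iUnion₂, lstar, Set.mem_setOf_eq, Set.mem_univ, iff_true]
    have hopenset : IsOpen (HClass y ∩ (fun d => ops.inv d * y) ⁻¹' U) :=
      (hopen y).inter (((hinv.mul continuous_const)).isOpen_preimage U hU)
    have hyin : y ∈ HClass y ∩ (fun d => ops.inv d * y) ⁻¹' U := by
      refine ⟨greenH_refl' y, ?_⟩
      show ops.inv y * y ∈ U
      rw [ops.inv_mul]
      exact hidem y
    obtain ⟨d, hdD, hdy, hdU⟩ := hD.exists_mem_open hopenset ⟨y, hyin⟩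
    exact ⟨d, hdD, hdU, idp_eq' ops hdy⟩
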